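/- The map δ_U : QDer(L) → Der(L̃) defined by δ_U(f)(a·t + b·t² + u·t²) = f(a)·t + f′(b)·t² is well-defined (independent of the choice of associated map f′), linear, injective, and a Lie algebra homomorphism: δ_U([f,g]) = [δ_U(f), δ_U(g)]. -/

import Mathlib

variable {K L : Type*} [Field K] [CharZero K] [AddCommGroup L] [Module K L]
  [FiniteDimensional K L]

/-- The map `δ_U` on the model `L̃ = L × L` of `L·t ⊕ L·t²`, determined by a
quasiderivation `f` together with a choice of associated map `f'`:
`a·t + b·t² + u·t² ↦ f(a)·t + f'(b)·t²`, where `b` is the projection onto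
`D = [L,L]` along the complement `U`. -/
noncomputable def deltaU (D U : Submodule K L) (hcompl : IsCompl D U)
    (f f' : L →ₗ[K] L) : (L × L) →ₗ[K] (L × L) :=
  LinearMap.prod (f ∘ₗ LinearMap.fst K L L)
    ((f' ∘ₗ D.subtype ∘ₗ Submodule.linearProjOfIsCompl D U hcompl) ∘ₗ LinearMap.snd K L L)

theorem stmt11 (br : L →ₗ[K] L →ₗ[K] L) (ω : L →ₗ[K] L →ₗ[K] K)
    (hanti : ∀ x y, br x y = - br y x)
    (hskew : ∀ x y, ω x y = - ω y x)
    (hjac : ∀ x y z, br (br x y) z + br (br y z) x + br (br z x) y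
      = ω x y • z + ω y z • x + ω z x • y)
    (D U : Submodule K L)
    (hD : D = Submodule.span K {z : L | ∃ x y, z = br x y})
    (hcompl : IsCompl D U) :
    -- well-definedness: δ_U(f) does not depend on the choice of associated map
    (∀ f f' f'' : L →ₗ[K] L,
      (∀ x y, br (f x) y + br x (f y) = f' (br x y)) →
      (∀ x y, br (f x) y + br x (f y) = f'' (br x y)) →
      deltaU D U hcompl f f' = deltaU D U hcompl f f'') ∧
    -- linearity
    (∀ f f' g g' : L →ₗ[K] L,
      (∀ x y, br (f x) y + br x (f y) = f' (br x y)) →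
      (∀ x y, br (g x) y + br x (g y) = g' (br x y)) →
      deltaU D U hcompl (f + g) (f' + g') = deltaU D U hcompl f f' + deltaU D U hcompl g g') ∧
    (∀ (c : K) (f f' : L →ₗ[K] L),
      (∀ x y, br (f x) y + br x (f y) = f' (br x y)) →
      deltaU D U hcompl (c • f) (c • f') = c • deltaU D U hcompl f f') ∧
    -- injectivity
    (∀ f f' g g' : L →ₗ[K] L,
      (∀ x y, br (f x) y + br x (f y) = f' (br x y)) →
      (∀ x y, br (g x) y + br x (g y) = g' (br x y)) →
      deltaU D U hcompl f f' = deltaU D U hcompl g g' → f = g) ∧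
    -- Lie algebra homomorphism
    (∀ f f' g g' : L →ₗ[K] L,
      (∀ x y, br (f x) y + br x (f y) = f' (br x y)) →
      (∀ x y, br (g x) y + br x (g y) = g' (br x y)) →
      deltaU D U hcompl (f ∘ₗ g - g ∘ₗ f) (f' ∘ₗ g' - g' ∘ₗ f')
        = deltaU D U hcompl f f' ∘ₗ deltaU D U hcompl g g'
          - deltaU D U hcompl g g' ∘ₗ deltaU D U hcompl f f') := by
  have hmem : ∀ (g g' : L →ₗ[K] L),
      (∀ x y, br (g x) y + br x (g y) = g' (br x y)) →
      ∀ d ∈ D, g' d ∈ D := by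
    intro g g' hg d hd
    rw [hD] at hd ⊢
    induction hd using Submodule.span_induction with
    | mem z hz =>
        obtain ⟨x, y, rfl⟩ := hz
        rw [← hg]
        exact add_mem (Submodule.subset_span ⟨_, _, rfl⟩) (Submodule.subset_span ⟨_, _, rfl⟩)
    | zero => simp
    | add x y _ _ hx hy => rw [map_add]; exact add_mem hx hy
    | smul c x _ hx => rw [map_smul]; exact Submodule.smul_mem _ _ hx
  have heqD : ∀ (g g' g'' : L →ₗ[K] L),
      (∀ x y, br (g x) y + br x (g y) = g' (br x y)) →
      (∀ x y, br (g x) y + br x (g y) = g'' (br x y)) →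
      ∀ d ∈ D, g' d = g'' d := by
    intro g g' g'' hg hg'' d hd
    rw [hD] at hd
    induction hd using Submodule.span_induction with
    | mem z hz => obtain ⟨x, y, rfl⟩ := hz; rw [← hg, hg'']
    | zero => simp
    | add x y _ _ hx hy => simp [map_add, hx, hy]
    | smul c x _ hx => simp [map_smul, hx]
  have hproj : ∀ (z : L) (hz : z ∈ D),
      Submodule.linearProjOfIsCompl D U hcompl z = ⟨z, hz⟩ := by
    intro z hz
    exact Submodule.linearProjOfIsCompl_apply_left hcompl ⟨z, hz⟩
  refine ⟨?_, ?_, ?_, ?_, ?_⟩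
  · intro f f' f'' hf hf''
    refine LinearMap.ext fun p => Prod.ext ?_ ?_
    · simp [deltaU]
    · simp only [deltaU, LinearMap.prod_apply, LinearMap.coe_comp, Function.comp_apply,
        LinearMap.fst_apply, LinearMap.snd_apply, Pi.prod, Submodule.subtype_apply]
      exact heqD f f' f'' hf hf'' _ (SetLike.coe_mem _)
  · intro f f' g g' hf hg
    refine LinearMap.ext fun p => Prod.ext ?_ ?_ <;> simp [deltaU]
  · intro c f f' hf
    refine LinearMap.ext fun p => Prod.ext ?_ ?_ <;> simp [deltaU]
  · intro f f' g g' hf hg h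
    ext x
    have := LinearMap.ext_iff.1 h (x, 0)
    simpa [deltaU, Prod.ext_iff] using this
  · intro f f' g g' hf hg
    refine LinearMap.ext fun p => Prod.ext ?_ ?_
    · simp [deltaU]
    · simp only [deltaU, LinearMap.prod_apply, LinearMap.coe_comp, Function.comp_apply,
        LinearMap.fst_apply, LinearMap.snd_apply, Function.prod, Submodule.subtype_apply,
        LinearMap.sub_apply, Prod.snd_sub]
      set d : L := (Submodule.linearProjOfIsCompl D U hcompl p.2 : L) with hd
      have hdD : d ∈ D := SetLike.coe_mem _
      rw [hproj (g' d) (hmem g g' hg d hdD), hproj (f' d) (hmem f f' hf d hdD)]
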